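/- The value function of any dual-feasible μ: if μ is dual-feasible and π is its induced policy (assuming positive state-marginals), then the dual objective Σ_{s,a} μ(s,a) r(s,a) equals (1-γ) Σ_s q(s) V^π(s), where V^π is the value function of π. -/
import Mathlib


open scoped BigOperators

/-- `P` is a transition kernel: each `P s a` is a probability distribution on states. -/
def IsKernel {S A : Type*} [Fintype S] (P : S → A → S → ℝ) : Prop :=
  ∀ s a, (∀ s', 0 ≤ P s a s') ∧ (∑ s', P s a s') = 1

/-- `π` is a randomized stationary policy. -/
def IsPolicy {S A : Type*} [Fintype A] (π : S → A → ℝ) : Prop :=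
  ∀ s, (∀ a, 0 ≤ π s a) ∧ (∑ a, π s a) = 1

/-- State-transition matrix induced by a policy. -/
noncomputable def Pmat {S A : Type*} [Fintype A] (P : S → A → S → ℝ) (π : S → A → ℝ) :
    Matrix S S ℝ :=
  Matrix.of fun s s' => ∑ a, π s a * P s a s'

/-- Expected one-step reward under a policy. -/
noncomputable def rPol {S A : Type*} [Fintype A] (r : S → A → ℝ) (π : S → A → ℝ) : S → ℝ :=
  fun s => ∑ a, π s a * r s a

/-- Expected discounted reward of the stationary policy `π` started at `s`. -/
noncomputable def polValue {S A : Type*} [Fintype S] [Fintype A] [DecidableEq S]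
    (P : S → A → S → ℝ) (r : S → A → ℝ) (γ : ℝ) (π : S → A → ℝ) : S → ℝ :=
  fun s => ∑' t : ℕ, γ ^ t * ((Pmat P π ^ t).mulVec (rPol r π)) s

/-- The Bellman optimality operator. -/
noncomputable def bellman {S A : Type*} [Fintype S] [Fintype A]
    (P : S → A → S → ℝ) (r : S → A → ℝ) (γ : ℝ) (V : S → ℝ) : S → ℝ :=
  fun s => ⨆ a, (r s a + γ * ∑ s', P s a s' * V s')

/-- Primal (LP) feasibility: `V ≥ T V` pointwise, written constraint-wise. -/
def PrimalFeasible {S A : Type*} [Fintype S]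
    (P : S → A → S → ℝ) (r : S → A → ℝ) (γ : ℝ) (V : S → ℝ) : Prop :=
  ∀ s a, r s a + γ * ∑ s', P s a s' * V s' ≤ V s

/-- Dual (LP) feasibility: nonnegativity and the flow-conservation constraint. -/
def DualFeasible {S A : Type*} [Fintype S] [Fintype A]
    (P : S → A → S → ℝ) (q : S → ℝ) (γ : ℝ) (μ : S → A → ℝ) : Prop :=
  (∀ s a, 0 ≤ μ s a) ∧
  ∀ s, ∑ a, μ s a = (1 - γ) * q s + γ * ∑ s', ∑ a', P s' a' s * μ s' a'

/-- the dual objective of a dual-feasible `μ` equals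
`(1-γ) Σ q(s) V^π(s)` for its induced policy `π`. -/
theorem dual_objective_is_policy_value
    {S A : Type*} [Fintype S] [Fintype A]
    (P : S → A → S → ℝ) (r : S → A → ℝ) (γ : ℝ) (q : S → ℝ)
    (hP : IsKernel P) (hγ0 : 0 ≤ γ) (hγ1 : γ < 1)
    (hq0 : ∀ s, 0 ≤ q s) (hq1 : ∑ s, q s = 1)
    (μ : S → A → ℝ) (hμ : DualFeasible P q γ μ)
    (hpos : ∀ s, 0 < ∑ a, μ s a)
    (Vπ : S → ℝ)
    (hbell : ∀ s, Vπ s = ∑ a, (μ s a / ∑ a', μ s a') *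
        (r s a + γ * ∑ s', P s a s' * Vπ s')) :
    ∑ s, ∑ a, μ s a * r s a = (1 - γ) * ∑ s, q s * Vπ s := by
  have key : ∀ s, (∑ a, μ s a) * Vπ s
      = ∑ a, μ s a * (r s a + γ * ∑ s', P s a s' * Vπ s') := by
    intro s
    rw [hbell s, Finset.mul_sum]
    refine Finset.sum_congr rfl fun a _ => ?_
    have h := (hpos s).ne'
    field_simp
  have hswap : ∑ s, ∑ a, μ s a * (γ * ∑ s', P s a s' * Vπ s')
      = γ * ∑ s', (∑ s, ∑ a, P s a s' * μ s a) * Vπ s' := by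
    calc ∑ s, ∑ a, μ s a * (γ * ∑ s', P s a s' * Vπ s')
        = ∑ s, ∑ a, ∑ s', γ * (P s a s' * μ s a * Vπ s') := by
          refine Finset.sum_congr rfl fun s _ => Finset.sum_congr rfl fun a _ => ?_
          rw [Finset.mul_sum, Finset.mul_sum]
          exact Finset.sum_congr rfl fun s' _ => by ring
      _ = ∑ s, ∑ s', ∑ a, γ * (P s a s' * μ s a * Vπ s') :=
          Finset.sum_congr rfl fun s _ => Finset.sum_comm
      _ = ∑ s', ∑ s, ∑ a, γ * (P s a s' * μ s a * Vπ s') := Finset.sum_comm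
      _ = γ * ∑ s', (∑ s, ∑ a, P s a s' * μ s a) * Vπ s' := by
          rw [Finset.mul_sum]
          refine Finset.sum_congr rfl fun s' _ => ?_
          rw [Finset.sum_mul, Finset.mul_sum]
          refine Finset.sum_congr rfl fun s _ => ?_
          rw [Finset.sum_mul, Finset.mul_sum]
  have hflow : ∀ s', γ * (∑ s, ∑ a, P s a s' * μ s a)
      = (∑ a, μ s' a) - (1 - γ) * q s' := by
    intro s'
    have := hμ.2 s'
    linarith
  have hsum : ∑ s, (∑ a, μ s a) * Vπ s
      = (∑ s, ∑ a, μ s a * r s a)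
        + ∑ s', ((∑ a, μ s' a) - (1 - γ) * q s') * Vπ s' := by
    calc ∑ s, (∑ a, μ s a) * Vπ s
        = ∑ s, ∑ a, μ s a * (r s a + γ * ∑ s', P s a s' * Vπ s') :=
          Finset.sum_congr rfl fun s _ => key s
      _ = (∑ s, ∑ a, μ s a * r s a)
          + ∑ s, ∑ a, μ s a * (γ * ∑ s', P s a s' * Vπ s') := by
          rw [← Finset.sum_add_distrib]
          refine Finset.sum_congr rfl fun s _ => ?_
          rw [← Finset.sum_add_distrib]
          refine Finset.sum_congr rfl fun a _ => ?_
          ring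
      _ = (∑ s, ∑ a, μ s a * r s a)
          + γ * ∑ s', (∑ s, ∑ a, P s a s' * μ s a) * Vπ s' := by rw [hswap]
      _ = (∑ s, ∑ a, μ s a * r s a)
          + ∑ s', ((∑ a, μ s' a) - (1 - γ) * q s') * Vπ s' := by
          rw [Finset.mul_sum]
          congr 1
          refine Finset.sum_congr rfl fun s' _ => ?_
          rw [← mul_assoc, hflow s']
  have hexp : ∑ s', ((∑ a, μ s' a) - (1 - γ) * q s') * Vπ s'
      = (∑ s, (∑ a, μ s a) * Vπ s) - (1 - γ) * ∑ s, q s * Vπ s := by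
    rw [Finset.mul_sum, ← Finset.sum_sub_distrib]
    refine Finset.sum_congr rfl fun s _ => ?_
    ring
  rw [hexp] at hsum
  linarith
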